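/- For all x ≥ 0 and a ∈ [0,1], log(1 + x^a) ≤ max{log(1+x), (log(1+x))^a}. -/

import Mathlib

open Real Set

lemma key_mono (a : ℝ) (ha0 : 0 < a) (ha1 : a < 1) :
    MonotoneOn (fun t : ℝ => (Real.log (1 + t)) ^ a - Real.log (1 + t ^ a))
      (Set.Icc (0:ℝ) 1) := by
  apply monotoneOn_of_deriv_nonneg (convex_Icc 0 1)
  · -- continuity
    apply ContinuousOn.sub
    · intro t ht
      apply ContinuousAt.continuousWithinAt
      apply ContinuousAt.rpow_const
      · exact (Real.continuousAt_log (by nlinarith [ht.1])).comp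
          (by fun_prop)
      · exact Or.inr ha0.le
    · intro t ht
      apply ContinuousAt.continuousWithinAt
      apply ContinuousAt.log
      · exact (continuous_const.add (continuous_id)).continuousAt.comp'
          (Real.continuousAt_rpow_const t a (Or.inr ha0.le)) |>.congr (by
            filter_upwards with y; rfl)
      · nlinarith [Real.rpow_natCast t 0, ht.1, Real.rpow_nonneg ht.1 a]
  · -- differentiability on interior
    rw [interior_Icc]
    intro t ht
    obtain ⟨ht0, ht1⟩ := ht
    have hL : 0 < Real.log (1 + t) := Real.log_pos (by linarith)
    have h1t : (0:ℝ) < 1 + t := by linarith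
    have hd1 : HasDerivAt (fun t : ℝ => (Real.log (1 + t)) ^ a)
        ((1 / (1 + t)) * a * (Real.log (1 + t)) ^ (a - 1)) t := by
      have hg : HasDerivAt (fun t : ℝ => Real.log (1 + t)) (1 / (1 + t)) t := by
        simpa using ((hasDerivAt_id t).const_add 1).log h1t.ne'
      simpa [mul_comm, mul_assoc, mul_left_comm] using hg.rpow_const (Or.inl hL.ne')
    have hd2 : HasDerivAt (fun t : ℝ => Real.log (1 + t ^ a))
        ((a * t ^ (a - 1)) / (1 + t ^ a)) t := by
      have hp : HasDerivAt (fun t : ℝ => 1 + t ^ a) (a * t ^ (a - 1)) t :=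
        (Real.hasDerivAt_rpow_const (Or.inl ht0.ne')).const_add 1
      have hne : 1 + t ^ a ≠ 0 := by positivity
      simpa using hp.log hne
    exact ((hd1.sub hd2).differentiableAt.differentiableWithinAt)
  · -- deriv nonneg
    rw [interior_Icc]
    intro t ht
    obtain ⟨ht0, ht1⟩ := ht
    have hL : 0 < Real.log (1 + t) := Real.log_pos (by linarith)
    have h1t : (0:ℝ) < 1 + t := by linarith
    have hd1 : HasDerivAt (fun t : ℝ => (Real.log (1 + t)) ^ a)
        ((1 / (1 + t)) * a * (Real.log (1 + t)) ^ (a - 1)) t := by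
      have hg : HasDerivAt (fun t : ℝ => Real.log (1 + t)) (1 / (1 + t)) t := by
        simpa using ((hasDerivAt_id t).const_add 1).log h1t.ne'
      simpa [mul_comm, mul_assoc, mul_left_comm] using hg.rpow_const (Or.inl hL.ne')
    have hd2 : HasDerivAt (fun t : ℝ => Real.log (1 + t ^ a))
        ((a * t ^ (a - 1)) / (1 + t ^ a)) t := by
      have hp : HasDerivAt (fun t : ℝ => 1 + t ^ a) (a * t ^ (a - 1)) t :=
        (Real.hasDerivAt_rpow_const (Or.inl ht0.ne')).const_add 1
      have hne : 1 + t ^ a ≠ 0 := by positivity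
      simpa using hp.log hne
    have hF : deriv (fun t : ℝ => (Real.log (1 + t)) ^ a - Real.log (1 + t ^ a)) t
        = (1 / (1 + t)) * a * (Real.log (1 + t)) ^ (a - 1) - (a * t ^ (a - 1)) / (1 + t ^ a) :=
      (hd1.sub hd2).deriv
    rw [hF]
    -- show the derivative expression is nonneg
    have hLt : Real.log (1 + t) ≤ t := by
      have := Real.log_le_sub_one_of_pos h1t
      linarith
    have h1 : t ^ (a - 1) ≤ (Real.log (1 + t)) ^ (a - 1) :=
      Real.rpow_le_rpow_of_nonpos hL hLt (by linarith)
    have h2 : t ≤ t ^ a := by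
      have := Real.rpow_le_rpow_of_exponent_ge ht0 ht1.le ha1.le
      rwa [Real.rpow_one] at this
    have h3 : (a * t ^ (a - 1)) / (1 + t ^ a) ≤ (a * (Real.log (1+t)) ^ (a-1)) / (1 + t) := by
      apply div_le_div₀ (by positivity) (by nlinarith) h1t (by linarith)
    have : (1 / (1 + t)) * a * (Real.log (1 + t)) ^ (a - 1)
        = (a * (Real.log (1+t)) ^ (a-1)) / (1 + t) := by ring
    rw [this]
    linarith

lemma key (a : ℝ) (ha0 : 0 < a) (ha1 : a < 1) (x : ℝ) (hx0 : 0 < x) (hx1 : x ≤ 1) :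
    Real.log (1 + x ^ a) ≤ (Real.log (1 + x)) ^ a := by
  have h := key_mono a ha0 ha1 (Set.mem_Icc.mpr ⟨le_refl 0, by norm_num⟩)
    (Set.mem_Icc.mpr ⟨hx0.le, hx1⟩) hx0.le
  simp only [Real.zero_rpow ha0.ne', add_zero, Real.log_one] at h
  have h0 : ((0:ℝ)) ^ a = 0 := Real.zero_rpow ha0.ne'
  linarith

theorem stmt_5 (x a : ℝ) (hx : 0 ≤ x) (ha : a ∈ Set.Icc (0:ℝ) 1) :
    Real.log (1 + x ^ a) ≤ max (Real.log (1 + x)) ((Real.log (1 + x)) ^ a) := by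
  obtain ⟨ha0, ha1⟩ := ha
  rcases le_or_gt 1 x with hx1 | hx1
  · -- x ≥ 1 : x^a ≤ x
    refine le_trans ?_ (le_max_left _ _)
    apply Real.log_le_log (by positivity)
    have : x ^ a ≤ x ^ (1:ℝ) := Real.rpow_le_rpow_of_exponent_le hx1 ha1
    rw [Real.rpow_one] at this
    linarith
  · rcases eq_or_lt_of_le ha0 with ha0' | ha0'
    · -- a = 0
      refine le_trans ?_ (le_max_right _ _)
      rw [← ha0', Real.rpow_zero, Real.rpow_zero]
      have : Real.log (1 + 1) ≤ 1 := by
        rw [show (1:ℝ)+1 = 2 by norm_num]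
        have := Real.log_two_lt_d9
        linarith
      simpa using this
    · rcases eq_or_lt_of_le ha1 with ha1' | ha1'
      · -- a = 1
        rw [ha1', Real.rpow_one]
        exact le_max_left _ _
      · rcases eq_or_lt_of_le hx with hx0 | hx0
        · -- x = 0
          refine le_trans ?_ (le_max_right _ _)
          rw [← hx0, Real.zero_rpow ha0'.ne', add_zero, Real.log_one,
            Real.zero_rpow ha0'.ne']
        · exact le_trans (key a ha0' ha1' x hx0 hx1.le) (le_max_right _ _)
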